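/- Continuation criterion, density gradient controls the vorticity (implication (c) ⇒ (d)): Let (ω, ρ) be a classical solution of the model on [0,T) with flow map Φ, with initial data ω₀ = ω(·,0). Then for every t ∈ [0,T): ‖ω(·,t)‖_∞ ≤ ‖ω₀‖_∞ + ∫₀ᵗ ‖∂_x ρ(·,s)‖_∞ ds. (Here one uses that ρ(·,s) vanishes near 0, so that ρ(y,s) ≤ ‖∂_x ρ(·,s)‖_∞ · y for all y ∈ (0,1).) -/

import Mathlib

open MeasureTheory

/-- The Biot–Savart velocity of the model:
`u(x,t) = x·∫_{min(β₂x,1)}^{min(β₁x,1)} ω(y,t)/y dy − x·∫_{min(β₁x,1)}^{1} ω(y,t)/y dy`. -/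
noncomputable def vel (β₁ β₂ : ℝ) (ω : ℝ → ℝ → ℝ) (x t : ℝ) : ℝ :=
  x * (∫ y in (min (β₂ * x) 1)..(min (β₁ * x) 1), ω y t / y)
    - x * ∫ y in (min (β₁ * x) 1)..(1:ℝ), ω y t / y

/-- A classical solution of the model on `(0,1) × [0,T)`, together with its flow map `Φ`. -/
structure IsClassicalSolution (β₁ β₂ T : ℝ) (ω ρ Φ : ℝ → ℝ → ℝ) : Prop where
  Tpos : 0 < T
  omega_smooth : ContDiffOn ℝ 1 (fun p : ℝ × ℝ => ω p.1 p.2) (Set.Ioo 0 1 ×ˢ Set.Ico 0 T)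
  rho_smooth : ContDiffOn ℝ 1 (fun p : ℝ × ℝ => ρ p.1 p.2) (Set.Ioo 0 1 ×ˢ Set.Ico 0 T)
  omega_nonneg : ∀ x t, 0 ≤ ω x t
  rho_nonneg : ∀ x t, 0 ≤ ρ x t
  supp : ∀ t, 0 ≤ t → t < T → ∃ a b : ℝ, 0 < a ∧ a ≤ b ∧ b < 1 ∧
      ∀ x, x ∉ Set.Icc a b → ω x t = 0 ∧ ρ x t = 0
  omega_eq : ∀ x ∈ Set.Ioo (0:ℝ) 1, ∀ t, 0 ≤ t → t < T →
      derivWithin (fun s => ω x s) (Set.Ico 0 T) t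
        + vel β₁ β₂ ω x t * deriv (fun y => ω y t) x = ρ x t / x
  rho_eq : ∀ x ∈ Set.Ioo (0:ℝ) 1, ∀ t, 0 ≤ t → t < T →
      derivWithin (fun s => ρ x s) (Set.Ico 0 T) t
        + vel β₁ β₂ ω x t * deriv (fun y => ρ y t) x = 0
  flow_init : ∀ x ∈ Set.Ioo (0:ℝ) 1, Φ x 0 = x
  flow_deriv : ∀ x ∈ Set.Ioo (0:ℝ) 1, ∀ t, 0 ≤ t → t < T →
      HasDerivWithinAt (fun s => Φ x s) (vel β₁ β₂ ω (Φ x t) t) (Set.Ico 0 T) t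
  flow_mono : ∀ t, 0 ≤ t → t < T → StrictMonoOn (fun x => Φ x t) (Set.Ioo 0 1)
  flow_bij : ∀ t, 0 ≤ t → t < T → Set.BijOn (fun x => Φ x t) (Set.Ioo 0 1) (Set.Ioo 0 1)

/-- Supremum norm over `(0,1)`. -/
noncomputable def supSlice (f : ℝ → ℝ) : ℝ := sSup ((fun x => |f x|) '' Set.Ioo 0 1)

/-! ### Auxiliary lemmas -/

lemma aux_bddAbove {f : ℝ → ℝ} {a b : ℝ}
    (hf : ContinuousOn f (Set.Icc a b)) (h0 : ∀ x, x ∉ Set.Icc a b → f x = 0) :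
    BddAbove ((fun x => |f x|) '' Set.Ioo 0 1) := by
  obtain ⟨C, hC⟩ := isCompact_Icc.exists_bound_of_continuousOn hf
  refine ⟨max C 0, ?_⟩
  rintro _ ⟨x, hx, rfl⟩
  by_cases h : x ∈ Set.Icc a b
  · exact le_max_of_le_left (by simpa using hC x h)
  · simp [h0 x h]

lemma aux_le_supSlice {f : ℝ → ℝ} (hb : BddAbove ((fun x => |f x|) '' Set.Ioo 0 1))
    {x : ℝ} (hx : x ∈ Set.Ioo (0:ℝ) 1) : |f x| ≤ supSlice f :=
  le_csSup hb ⟨x, hx, rfl⟩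

lemma aux_supSlice_nonneg {f : ℝ → ℝ} (hb : BddAbove ((fun x => |f x|) '' Set.Ioo 0 1)) :
    0 ≤ supSlice f :=
  le_trans (abs_nonneg (f (1/2))) (aux_le_supSlice hb (by norm_num))

/-- Spatial partial derivative identified from the joint `C¹` smoothness. -/
lemma aux_hasDerivAt_slice {F : ℝ → ℝ → ℝ} {T : ℝ}
    (hF : ContDiffOn ℝ 1 (fun p : ℝ × ℝ => F p.1 p.2) (Set.Ioo 0 1 ×ˢ Set.Ico 0 T))
    {x s : ℝ} (hx : x ∈ Set.Ioo (0:ℝ) 1) (hs : s ∈ Set.Ico (0:ℝ) T) :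
    HasDerivAt (fun y => F y s)
      (fderivWithin ℝ (fun p : ℝ × ℝ => F p.1 p.2) (Set.Ioo 0 1 ×ˢ Set.Ico 0 T) (x, s)
        ((1:ℝ), (0:ℝ))) x := by
  have hmem : ((x, s) : ℝ × ℝ) ∈ Set.Ioo (0:ℝ) 1 ×ˢ Set.Ico (0:ℝ) T := ⟨hx, hs⟩
  have hd : HasFDerivWithinAt (fun p : ℝ × ℝ => F p.1 p.2)
      (fderivWithin ℝ (fun p : ℝ × ℝ => F p.1 p.2) (Set.Ioo 0 1 ×ˢ Set.Ico 0 T) (x, s))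
      (Set.Ioo 0 1 ×ˢ Set.Ico 0 T) (x, s) :=
    ((hF.differentiableOn one_ne_zero) _ hmem).hasFDerivWithinAt
  have hc : HasDerivWithinAt (fun y : ℝ => ((y, s) : ℝ × ℝ)) ((1:ℝ), (0:ℝ))
      (Set.Ioo 0 1) x :=
    ((hasDerivAt_id x).prodMk (hasDerivAt_const x s)).hasDerivWithinAt
  have := hd.comp_hasDerivWithinAt x hc (fun y (hy : y ∈ Set.Ioo (0:ℝ) 1) =>
    (⟨hy, hs⟩ : ((y, s) : ℝ × ℝ) ∈ Set.Ioo (0:ℝ) 1 ×ˢ Set.Ico (0:ℝ) T))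
  exact this.hasDerivAt (isOpen_Ioo.mem_nhds hx)

/-- Temporal partial derivative identified from the joint `C¹` smoothness. -/
lemma aux_hasDerivWithinAt_time {F : ℝ → ℝ → ℝ} {T : ℝ}
    (hF : ContDiffOn ℝ 1 (fun p : ℝ × ℝ => F p.1 p.2) (Set.Ioo 0 1 ×ˢ Set.Ico 0 T))
    {x s : ℝ} (hx : x ∈ Set.Ioo (0:ℝ) 1) (hs : s ∈ Set.Ico (0:ℝ) T) :
    HasDerivWithinAt (fun r => F x r)
      (fderivWithin ℝ (fun p : ℝ × ℝ => F p.1 p.2) (Set.Ioo 0 1 ×ˢ Set.Ico 0 T) (x, s)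
        ((0:ℝ), (1:ℝ))) (Set.Ico 0 T) s := by
  have hmem : ((x, s) : ℝ × ℝ) ∈ Set.Ioo (0:ℝ) 1 ×ˢ Set.Ico (0:ℝ) T := ⟨hx, hs⟩
  have hd : HasFDerivWithinAt (fun p : ℝ × ℝ => F p.1 p.2)
      (fderivWithin ℝ (fun p : ℝ × ℝ => F p.1 p.2) (Set.Ioo 0 1 ×ˢ Set.Ico 0 T) (x, s))
      (Set.Ioo 0 1 ×ˢ Set.Ico 0 T) (x, s) :=
    ((hF.differentiableOn one_ne_zero) _ hmem).hasFDerivWithinAt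
  have hc : HasDerivWithinAt (fun r : ℝ => ((x, r) : ℝ × ℝ)) ((0:ℝ), (1:ℝ))
      (Set.Ico 0 T) s :=
    ((hasDerivAt_const s x).prodMk (hasDerivAt_id s)).hasDerivWithinAt
  exact hd.comp_hasDerivWithinAt s hc (fun r hr => ⟨hx, hr⟩)

/-- The density bound: `ρ(y,s)/y ≤ ‖∂ₓρ(·,s)‖_∞` since `ρ` vanishes near `0`. -/
lemma aux_rho_bound {β₁ β₂ T : ℝ} {ω ρ Φ : ℝ → ℝ → ℝ}
    (hsol : IsClassicalSolution β₁ β₂ T ω ρ Φ)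
    {y s : ℝ} (hy : y ∈ Set.Ioo (0:ℝ) 1) (hs : s ∈ Set.Ico (0:ℝ) T) :
    ρ y s / y ≤ supSlice (fun x => deriv (fun z => ρ z s) x) := by
  obtain ⟨a, b, ha, hab, hb1, hsupp⟩ := hsol.supp s hs.1 hs.2
  set S := Set.Ioo (0:ℝ) 1 ×ˢ Set.Ico (0:ℝ) T with hS
  have huniq : UniqueDiffOn ℝ S :=
    (isOpen_Ioo.uniqueDiffOn).prod (uniqueDiffOn_Ico 0 T)
  -- the spatial derivative of ρ exists everywhere in (0,1)
  have hder : ∀ z ∈ Set.Ioo (0:ℝ) 1,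
      HasDerivAt (fun w => ρ w s) (deriv (fun w => ρ w s) z) z := fun z hz =>
    ((aux_hasDerivAt_slice hsol.rho_smooth hz hs).differentiableAt).hasDerivAt
  have hEq : ∀ z ∈ Set.Ioo (0:ℝ) 1, deriv (fun w => ρ w s) z
      = fderivWithin ℝ (fun p : ℝ × ℝ => ρ p.1 p.2) S (z, s) ((1:ℝ), (0:ℝ)) := fun z hz =>
    (aux_hasDerivAt_slice hsol.rho_smooth hz hs).deriv
  -- continuity of the spatial derivative of ρ on (0,1)
  have hfc : ContinuousOn
      (fun z => fderivWithin ℝ (fun p : ℝ × ℝ => ρ p.1 p.2) S (z, s) ((1:ℝ), (0:ℝ)))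
      (Set.Ioo 0 1) := by
    have h1 : ContinuousOn (fun p : ℝ × ℝ => fderivWithin ℝ (fun p : ℝ × ℝ => ρ p.1 p.2) S p) S :=
      hsol.rho_smooth.continuousOn_fderivWithin huniq le_rfl
    have h2 : ContinuousOn (fun z : ℝ => ((z, s) : ℝ × ℝ)) (Set.Ioo 0 1) :=
      (continuous_id.prodMk continuous_const).continuousOn
    exact ((h1.comp h2 fun z hz => ⟨hz, hs⟩).clm_apply continuousOn_const)
  have hdc : ContinuousOn (fun z => deriv (fun w => ρ w s) z) (Set.Ioo 0 1) :=
    hfc.congr hEq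
  have hIcc : Set.Icc a b ⊆ Set.Ioo (0:ℝ) 1 := fun z hz =>
    ⟨lt_of_lt_of_le ha hz.1, lt_of_le_of_lt hz.2 hb1⟩
  -- the spatial derivative vanishes outside [a,b]
  have hzero : ∀ z, z ∉ Set.Icc a b → deriv (fun w => ρ w s) z = 0 := by
    intro z hz
    have hev : (fun w => ρ w s) =ᶠ[nhds z] fun _ => (0:ℝ) := by
      filter_upwards [isClosed_Icc.isOpen_compl.mem_nhds hz] with w hw
      exact (hsupp w hw).2
    rw [hev.deriv_eq]
    exact deriv_const z 0
  have hbdd : BddAbove ((fun x => |deriv (fun z => ρ z s) x|) '' Set.Ioo 0 1) :=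
    aux_bddAbove (hdc.mono hIcc) hzero
  set M := supSlice (fun x => deriv (fun z => ρ z s) x) with hM
  have hM0 : 0 ≤ M := aux_supSlice_nonneg hbdd
  by_cases hya : y ≤ a / 2
  · have hρ0 : ρ y s = 0 := (hsupp y (fun h => by have := h.1; linarith)).2
    rw [hρ0, zero_div]; exact hM0
  · push_neg at hya
    have hρε : ρ (a/2) s = 0 := (hsupp (a/2) (fun h => by have := h.1; linarith)).2
    have hsub : Set.Icc (a/2) y ⊆ Set.Ioo (0:ℝ) 1 := fun z hz =>
      ⟨lt_of_lt_of_le (by linarith) hz.1, lt_of_le_of_lt hz.2 hy.2⟩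
    have hcont : ContinuousOn (fun w => ρ w s) (Set.Icc (a/2) y) := fun z hz =>
      ((hder z (hsub hz)).continuousAt).continuousWithinAt
    obtain ⟨c, hc, hceq⟩ := exists_hasDerivAt_eq_slope (fun w => ρ w s)
      (fun w => deriv (fun w => ρ w s) w) hya hcont
      (fun z hz => hder z (hsub (Set.Ioo_subset_Icc_self hz)))
    have hc01 : c ∈ Set.Ioo (0:ℝ) 1 := hsub (Set.Ioo_subset_Icc_self hc)
    have hMc : deriv (fun w => ρ w s) c ≤ M :=
      le_trans (le_abs_self _) (aux_le_supSlice hbdd hc01)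
    have hne : y - a/2 ≠ 0 := by linarith
    have h1 : deriv (fun w => ρ w s) c * (y - a/2) = ρ y s := by
      rw [hceq, hρε, sub_zero, div_mul_cancel₀ _ hne]
    rw [div_le_iff₀ hy.1]
    have h2 : deriv (fun w => ρ w s) c * (y - a/2) ≤ M * (y - a/2) :=
      mul_le_mul_of_nonneg_right hMc (by linarith)
    have h3 : M * (y - a/2) ≤ M * y := by nlinarith
    linarith

/-- **Continuation criterion (c) ⇒ (d):** the density gradient controls the vorticity:
`‖ω(·,t)‖_∞ ≤ ‖ω₀‖_∞ + ∫₀ᵗ ‖∂ₓρ(·,s)‖_∞ ds`. -/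
theorem grad_rho_controls_omega (β₁ β₂ T : ℝ) (hβ₂ : 0 < β₂) (hβ₂1 : β₂ ≤ 1) (hβ₁ : 1 ≤ β₁)
    (ω ρ Φ : ℝ → ℝ → ℝ) (hsol : IsClassicalSolution β₁ β₂ T ω ρ Φ)
    (hint : ∀ t, 0 ≤ t → t < T →
      IntervalIntegrable (fun s => supSlice (fun x => deriv (fun y => ρ y s) x))
        MeasureTheory.volume 0 t) :
    ∀ t, 0 ≤ t → t < T →
      supSlice (fun x => ω x t)
        ≤ supSlice (fun x => ω x 0)
            + ∫ s in (0:ℝ)..t, supSlice (fun x => deriv (fun y => ρ y s) x) := by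
  intro t ht htT
  set S := Set.Ioo (0:ℝ) 1 ×ˢ Set.Ico (0:ℝ) T with hS
  have huniq : UniqueDiffOn ℝ S := (isOpen_Ioo.uniqueDiffOn).prod (uniqueDiffOn_Ico 0 T)
  -- boundedness of |ω(·,r)| on (0,1) for r ∈ [0,T)
  have hbddω : ∀ r, 0 ≤ r → r < T →
      BddAbove ((fun x => |ω x r|) '' Set.Ioo 0 1) := by
    intro r hr hrT
    obtain ⟨a, b, ha, hab, hb1, hsupp⟩ := hsol.supp r hr hrT
    have hIcc : Set.Icc a b ⊆ Set.Ioo (0:ℝ) 1 := fun z hz =>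
      ⟨lt_of_lt_of_le ha hz.1, lt_of_le_of_lt hz.2 hb1⟩
    have hcont : ContinuousOn (fun x => ω x r) (Set.Icc a b) := by
      have h2 : ContinuousOn (fun z : ℝ => ((z, r) : ℝ × ℝ)) (Set.Icc a b) :=
        (continuous_id.prodMk continuous_const).continuousOn
      exact hsol.omega_smooth.continuousOn.comp h2 (fun z hz => ⟨hIcc hz, hr, hrT⟩)
    exact aux_bddAbove hcont (fun x hx => (hsupp x hx).1)
  -- the key estimate along trajectories
  have hKey : ∀ x ∈ Set.Ioo (0:ℝ) 1, ω (Φ x t) t ≤ ω x 0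
      + ∫ s in (0:ℝ)..t, supSlice (fun z => deriv (fun y => ρ y s) z) := by
    intro x hx
    -- derivative of g(s) = ω(Φ(x,s), s) within [0,T)
    have hg : ∀ s ∈ Set.Ico (0:ℝ) T,
        HasDerivWithinAt (fun r => ω (Φ x r) r) (ρ (Φ x s) s / Φ x s) (Set.Ico 0 T) s := by
      intro s hs
      have hy : Φ x s ∈ Set.Ioo (0:ℝ) 1 := (hsol.flow_bij s hs.1 hs.2).mapsTo hx
      set u := vel β₁ β₂ ω (Φ x s) s with hu
      set L := fderivWithin ℝ (fun p : ℝ × ℝ => ω p.1 p.2) S (Φ x s, s) with hL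
      have hγ : HasDerivWithinAt (fun r => ((Φ x r, r) : ℝ × ℝ)) ((u, 1) : ℝ × ℝ)
          (Set.Ico 0 T) s :=
        (hsol.flow_deriv x hx s hs.1 hs.2).prodMk (hasDerivWithinAt_id s _)
      have hd : HasFDerivWithinAt (fun p : ℝ × ℝ => ω p.1 p.2) L S (Φ x s, s) :=
        ((hsol.omega_smooth.differentiableOn one_ne_zero) _ ⟨hy, hs⟩).hasFDerivWithinAt
      have hcomp : HasDerivWithinAt (fun r => ω (Φ x r) r) (L ((u, 1) : ℝ × ℝ))
          (Set.Ico 0 T) s :=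
        HasFDerivWithinAt.comp_hasDerivWithinAt (f := fun r => ((Φ x r, r) : ℝ × ℝ)) s hd hγ
          (fun r hr => ⟨(hsol.flow_bij r hr.1 hr.2).mapsTo hx, hr⟩)
      have h1 : L ((1:ℝ), (0:ℝ)) = deriv (fun z => ω z s) (Φ x s) :=
        ((aux_hasDerivAt_slice hsol.omega_smooth hy hs).deriv).symm
      have h2 : L ((0:ℝ), (1:ℝ)) = derivWithin (fun r => ω (Φ x s) r) (Set.Ico 0 T) s :=
        ((aux_hasDerivWithinAt_time hsol.omega_smooth hy hs).derivWithin
          ((uniqueDiffOn_Ico 0 T) s hs)).symm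
      have hsplit : L ((u, 1) : ℝ × ℝ) = u * L ((1:ℝ), (0:ℝ)) + L ((0:ℝ), (1:ℝ)) := by
        have : ((u, 1) : ℝ × ℝ) = u • ((1:ℝ), (0:ℝ)) + ((0:ℝ), (1:ℝ)) := by
          simp [Prod.ext_iff]
        rw [this, map_add, _root_.map_smul, smul_eq_mul]
      have heq : L ((u, 1) : ℝ × ℝ) = ρ (Φ x s) s / Φ x s := by
        rw [hsplit, h1, h2]
        have := hsol.omega_eq (Φ x s) hy s hs.1 hs.2
        linarith
      rw [heq] at hcomp
      exact hcomp
    have hsubT : Set.Icc (0:ℝ) t ⊆ Set.Ico (0:ℝ) T := fun s hs =>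
      ⟨hs.1, lt_of_le_of_lt hs.2 htT⟩
    -- continuity of g on [0, t]
    have hgc : ContinuousOn (fun r => ω (Φ x r) r) (Set.Icc 0 t) := fun s hs =>
      ((hg s (hsubT hs)).mono hsubT).continuousWithinAt
    -- continuity (hence integrability) of g' on [0, t]
    have hΦc : ContinuousOn (fun r => Φ x r) (Set.Icc 0 t) := fun s hs =>
      ((hsol.flow_deriv x hx s (hsubT hs).1 (hsubT hs).2).mono hsubT).continuousWithinAt
    have hg'c : ContinuousOn (fun s => ρ (Φ x s) s / Φ x s) (Set.Icc 0 t) := by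
      have hmap : ∀ s ∈ Set.Icc (0:ℝ) t, ((Φ x s, s) : ℝ × ℝ) ∈ S := fun s hs =>
        ⟨(hsol.flow_bij s (hsubT hs).1 (hsubT hs).2).mapsTo hx, hsubT hs⟩
      have hcurve : ContinuousOn (fun s : ℝ => ((Φ x s, s) : ℝ × ℝ)) (Set.Icc 0 t) :=
        hΦc.prodMk continuousOn_id
      have hnum : ContinuousOn (fun s => ρ (Φ x s) s) (Set.Icc 0 t) :=
        hsol.rho_smooth.continuousOn.comp hcurve hmap
      exact hnum.div hΦc (fun s hs => ne_of_gt (hmap s hs).1.1)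
    have hg'int : IntervalIntegrable (fun s => ρ (Φ x s) s / Φ x s) volume 0 t := by
      rw [intervalIntegrable_iff_integrableOn_Icc_of_le ht]
      exact hg'c.integrableOn_compact isCompact_Icc
    -- FTC
    have hFTC : (∫ s in (0:ℝ)..t, ρ (Φ x s) s / Φ x s)
        = ω (Φ x t) t - ω (Φ x 0) 0 := by
      apply intervalIntegral.integral_eq_sub_of_hasDeriv_right_of_le ht hgc _ hg'int
      intro s hs
      have hsT : s ∈ Set.Ico (0:ℝ) T := ⟨le_of_lt hs.1, lt_trans hs.2 htT⟩
      exact ((hg s hsT).hasDerivAt (Ico_mem_nhds hs.1 hsT.2)).hasDerivWithinAt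
    -- compare the integrals
    have hmono : (∫ s in (0:ℝ)..t, ρ (Φ x s) s / Φ x s)
        ≤ ∫ s in (0:ℝ)..t, supSlice (fun z => deriv (fun y => ρ y s) z) := by
      apply intervalIntegral.integral_mono_on ht hg'int (hint t ht htT)
      intro s hs
      exact aux_rho_bound hsol ((hsol.flow_bij s (hsubT hs).1 (hsubT hs).2).mapsTo hx) (hsubT hs)
    have hinit : Φ x 0 = x := hsol.flow_init x hx
    rw [hinit] at hFTC
    linarith
  -- assemble: take sup over (0,1)
  have hne : ((fun x => |ω x t|) '' Set.Ioo 0 1).Nonempty :=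
    ⟨|ω (1/2) t|, ⟨1/2, by norm_num, rfl⟩⟩
  apply csSup_le hne
  rintro _ ⟨y, hy, rfl⟩
  obtain ⟨x, hx, hΦx⟩ := (hsol.flow_bij t ht htT).surjOn hy
  have h1 : |ω y t| = ω y t := abs_of_nonneg (hsol.omega_nonneg y t)
  have h2 : ω x 0 ≤ supSlice (fun z => ω z 0) := by
    have := aux_le_supSlice (hbddω 0 le_rfl hsol.Tpos) hx
    rwa [abs_of_nonneg (hsol.omega_nonneg x 0)] at this
  have h3 := hKey x hx
  rw [show (fun x => Φ x t) x = Φ x t from rfl] at hΦx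
  rw [hΦx] at h3
  show |ω y t| ≤ _
  rw [h1]
  linarith
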